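/- There exists a countable set A of topological group automorphisms of 𝕋^ω such that for every finite set F ⊆ 𝕋^ω and every neighborhood U of zero, there exists α ∈ A with F ⊆ α(U). -/

import Mathlib

namespace Stmt9Aux

noncomputable section

abbrev T : Type := AddCircle (1 : ℝ)
abbrev G : Type := ℕ → T

/-! ### list lookup -/

def lk : List (ℕ × ℕ) → ℕ → Option ℕ
  | [], _ => none
  | (x, y) :: tl, l => if l = x then some y else lk tl l

lemma lk_mem {L : List (ℕ × ℕ)} {l y : ℕ} (h : lk L l = some y) : (l, y) ∈ L := by
  induction L with
  | nil => simp [lk] at h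
  | cons hd tl ih =>
    obtain ⟨x, z⟩ := hd
    simp only [lk] at h
    split at h
    · rename_i hx
      simp only [Option.some.injEq] at h
      subst hx; subst h; simp
    · exact List.mem_cons_of_mem _ (ih h)

lemma lk_eq_some {L : List (ℕ × ℕ)} {l y : ℕ} (hmem : (l, y) ∈ L)
    (hnd : (L.map Prod.fst).Nodup) : lk L l = some y := by
  induction L with
  | nil => simp at hmem
  | cons hd tl ih =>
    obtain ⟨x, z⟩ := hd
    simp only [List.map_cons, List.nodup_cons] at hnd
    simp only [List.mem_cons] at hmem
    simp only [lk]
    rcases hmem with h | h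
    · rw [Prod.mk.injEq] at h
      rw [if_pos h.1, h.2]
    · have hne : l ≠ x := by
        rintro rfl
        exact hnd.1 (List.mem_map.2 ⟨(l, y), h, rfl⟩)
      rw [if_neg hne]
      exact ih h hnd.2

lemma lk_eq_none {L : List (ℕ × ℕ)} {l : ℕ} (h : l ∉ L.map Prod.fst) : lk L l = none := by
  induction L with
  | nil => rfl
  | cons hd tl ih =>
    obtain ⟨x, z⟩ := hd
    simp only [List.map_cons, List.mem_cons, not_or] at h
    simp only [lk, if_neg h.1]
    exact ih h.2

/-! ### swap function from a list of disjoint pairs -/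

def swapFn (L : List (ℕ × ℕ)) (l : ℕ) : ℕ :=
  (lk L l).elim ((lk (L.map Prod.swap) l).elim l id) id

lemma swapFn_of_lk {L : List (ℕ × ℕ)} {l y : ℕ} (h : lk L l = some y) :
    swapFn L l = y := by simp [swapFn, h]

lemma swapfst (L : List (ℕ × ℕ)) : (L.map Prod.swap).map Prod.fst = L.map Prod.snd := by
  rw [List.map_map]; rfl

lemma swapFn_involutive {L : List (ℕ × ℕ)}
    (h : (L.map Prod.fst ++ L.map Prod.snd).Nodup) :
    Function.Involutive (swapFn L) := by
  rw [List.nodup_append] at h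
  obtain ⟨h1, h2, h3⟩ := h
  intro l
  rcases hl : lk L l with _ | y
  · rcases hr : lk (L.map Prod.swap) l with _ | x
    · simp [swapFn, hl, hr]
    · -- (l, x) ∈ L.map swap, so (x, l) ∈ L
      have hmem : (x, l) ∈ L := by
        obtain ⟨⟨u, v⟩, huv, heq⟩ := List.mem_map.1 (lk_mem hr)
        simp only [Prod.swap_prod_mk, Prod.mk.injEq] at heq
        obtain ⟨rfl, rfl⟩ := heq
        exact huv
      have hx : lk L x = some l := lk_eq_some hmem h1
      have : swapFn L l = x := by simp [swapFn, hl, hr]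
      rw [this, swapFn_of_lk hx]
  · -- (l, y) ∈ L
    have hmem : (l, y) ∈ L := lk_mem hl
    have hysnd : y ∈ L.map Prod.snd := List.mem_map.2 ⟨(l, y), hmem, rfl⟩
    have hynotfst : y ∉ L.map Prod.fst := fun hy => h3 y hy y hysnd rfl
    have hy1 : lk L y = none := lk_eq_none hynotfst
    have hy2 : lk (L.map Prod.swap) y = some l := by
      refine lk_eq_some ?_ ?_
      · exact List.mem_map.2 ⟨(l, y), hmem, rfl⟩
      · rw [swapfst]; exact h2
    have : swapFn L l = y := swapFn_of_lk hl
    rw [this]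
    simp [swapFn, hy1, hy2]

/-! ### the swap (permutation) automorphism -/

open Classical in
def swapAut (s : ℕ → ℕ) : AddAut G :=
  if h : Function.Involutive s then
    { toFun := fun x => x ∘ s
      invFun := fun x => x ∘ s
      left_inv := fun x => funext fun l => congrArg x (h l)
      right_inv := fun x => funext fun l => congrArg x (h l)
      map_add' := fun _ _ => rfl }
  else 0

lemma swapAut_apply {s : ℕ → ℕ} (h : Function.Involutive s) (x : G) (l : ℕ) :
    swapAut s x l = x (s l) := by
  rw [swapAut, dif_pos h]; rfl

lemma cont_swapAut (s : ℕ → ℕ) : Continuous ⇑(swapAut s) := by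
  rw [swapAut]
  split
  · exact continuous_pi fun l => continuous_apply _
  · exact continuous_id

lemma cont_swapAut_symm (s : ℕ → ℕ) : Continuous ⇑(swapAut s).symm := by
  rw [swapAut]
  split
  · exact continuous_pi fun l => continuous_apply _
  · exact continuous_id

/-! ### the shear automorphism -/

def san (f : ℕ → Option ℕ) : ℕ → Option ℕ := fun l =>
  (f l).elim none (fun j => (f j).elim (some j) (fun _ => none))

lemma san_eq_some {f : ℕ → Option ℕ} {l j : ℕ} (h1 : f l = some j) (h2 : f j = none) :
    san f l = some j := by simp [san, h1, h2]

lemma san_none {f : ℕ → Option ℕ} {l j : ℕ} (h : san f l = some j) : san f j = none := by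
  rcases hfl : f l with _ | j'
  · simp [san, hfl] at h
  · rcases hfj : f j' with _ | z
    · have heq : j' = j := by simpa [san, hfl, hfj] using h
      subst heq
      simp [san, hfj]
    · simp [san, hfl, hfj] at h

def shearAut (f : ℕ → Option ℕ) : AddAut G :=
  { toFun := fun x l => x l - (san f l).elim 0 x
    invFun := fun y l => y l + (san f l).elim 0 y
    left_inv := by
      intro x
      funext l
      rcases h : san f l with _ | j
      · simp [h]
      · simp [h, san_none h]
    right_inv := by
      intro y
      funext l
      rcases h : san f l with _ | j
      · simp [h]
      · simp [h, san_none h]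
    map_add' := by
      intro x y
      funext l
      rcases h : san f l with _ | j
      · simp [h]
      · simp only [Pi.add_apply, h, Option.elim]
        abel }

lemma shearAut_apply (f : ℕ → Option ℕ) (x : G) (l : ℕ) :
    shearAut f x l = x l - (san f l).elim 0 x := rfl

lemma cont_shearAut (f : ℕ → Option ℕ) : Continuous ⇑(shearAut f) := by
  refine continuous_pi fun l => ?_
  have hc : ∀ m : ℕ, Continuous fun x : G => x m := fun m => continuous_apply m
  rcases h : san f l with _ | j
  · simpa [shearAut_apply, h] using (show Continuous fun x : G => x l - (0 : T) from (hc l).sub (continuous_const : Continuous fun _ : G => (0 : T)))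
  · simpa [shearAut_apply, h] using (show Continuous fun x : G => x l - x j from (hc l).sub (hc j))

lemma shearAut_symm_apply (f : ℕ → Option ℕ) (y : G) (l : ℕ) :
    (shearAut f).symm y l = y l + (san f l).elim 0 y := rfl

lemma cont_shearAut_symm (f : ℕ → Option ℕ) : Continuous ⇑(shearAut f).symm := by
  refine continuous_pi fun l => ?_
  have hc : ∀ m : ℕ, Continuous fun x : G => x m := fun m => continuous_apply m
  rcases h : san f l with _ | j
  · simpa [shearAut_symm_apply, h] using (show Continuous fun x : G => x l + (0 : T) from (hc l).add (continuous_const : Continuous fun _ : G => (0 : T)))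
  · simpa [shearAut_symm_apply, h] using (show Continuous fun x : G => x l + x j from (hc l).add (hc j))

/-! ### the parametrized family -/

def Phi (d : List (ℕ × ℕ) × List (ℕ × ℕ)) : AddAut G :=
  swapAut (swapFn d.1) + shearAut (lk d.2)

lemma cont_Phi (d : List (ℕ × ℕ) × List (ℕ × ℕ)) : Continuous ⇑(Phi d) := by
  have he : ⇑(Phi d) = ⇑(swapAut (swapFn d.1)) ∘ ⇑(shearAut (lk d.2)) := by
    funext x; exact AddAut.mul_apply _ _ _ _
  rw [he]
  exact (cont_swapAut _).comp (cont_shearAut _)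

lemma cont_Phi_symm (d : List (ℕ × ℕ) × List (ℕ × ℕ)) : Continuous ⇑(Phi d).symm := by
  have he : ⇑(Phi d).symm = ⇑(shearAut (lk d.2)).symm ∘ ⇑(swapAut (swapFn d.1)).symm := by
    funext x
    show (swapAut (swapFn d.1) + shearAut (lk d.2)).symm x = _
    rw [← AddAut.inv_def, neg_add_rev, AddAut.mul_apply, AddAut.inv_def, AddAut.inv_def]
    rfl
  rw [he]
  exact (cont_shearAut_symm _).comp (cont_swapAut_symm _)

end

end Stmt9Aux

open Stmt9Aux in
theorem stmt9 :
    ∃ A : Set (AddAut (ℕ → AddCircle (1 : ℝ))), A.Countable ∧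
      (∀ α ∈ A, Continuous ⇑α ∧ Continuous ⇑α.symm) ∧
      ∀ F : Set (ℕ → AddCircle (1 : ℝ)), F.Finite →
        ∀ U ∈ nhds (0 : ℕ → AddCircle (1 : ℝ)), ∃ α ∈ A, F ⊆ ⇑α '' U := by
  classical
  refine ⟨Set.range (fun d : List (ℕ × ℕ) × List (ℕ × ℕ) => -(Phi d)),
    Set.countable_range _, ?_, ?_⟩
  · rintro α ⟨d, rfl⟩
    constructor
    · show Continuous ⇑(-(Phi d))
      rw [AddAut.inv_def]
      exact cont_Phi_symm d
    · show Continuous ⇑(-(Phi d)).symm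
      rw [AddAut.inv_def, AddEquiv.symm_symm]
      exact cont_Phi d
  · intro F hF U hU
    rw [nhds_pi, Filter.mem_pi] at hU
    obtain ⟨I, hIfin, V, hV, hVU⟩ := hU
    set V0 : Set T := ⋂ i ∈ I, V i with hV0def
    have hV0 : V0 ∈ nhds (0 : T) := (Filter.biInter_mem hIfin).2 fun i _ => hV i
    haveI : Finite ↥F := hF.to_subtype
    -- column map
    let col : ℕ → (↥F → T) := fun j p => (p : G) j
    have hW' : Set.pi Set.univ (fun _ : ↥F => V0) ∈ nhds (0 : ↥F → T) :=
      set_pi_mem_nhds Set.finite_univ fun a _ => hV0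
    set W' : Set (↥F → T) := Set.pi Set.univ (fun _ : ↥F => V0) with hW'def
    -- split W' into two halves via continuity of subtraction
    have hsubcont : Filter.Tendsto (fun q : (↥F → T) × (↥F → T) => q.1 - q.2)
        (nhds (0, 0)) (nhds 0) := by
      have hc : Continuous (fun q : (↥F → T) × (↥F → T) => q.1 - q.2) :=
        continuous_fst.sub continuous_snd
      simpa using hc.tendsto (0, 0)
    have hpre : (fun q : (↥F → T) × (↥F → T) => q.1 - q.2) ⁻¹' W' ∈
        nhds (((0 : ↥F → T), (0 : ↥F → T))) := hsubcont hW'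
    rw [nhds_prod_eq] at hpre
    obtain ⟨Wa, hWa, Wb, hWb, hprod⟩ := Filter.mem_prod_iff.1 hpre
    obtain ⟨O, hOsub, hOopen, hO0⟩ := mem_nhds_iff.1 (Filter.inter_mem hWa hWb)
    -- compactness cover
    have hcover : (Set.univ : Set (↥F → T)) ⊆ ⋃ y : ↥F → T, (fun x => x - y) ⁻¹' O := by
      intro x _
      exact Set.mem_iUnion.2 ⟨x, by simpa using hO0⟩
    obtain ⟨t, ht⟩ := isCompact_univ.elim_finite_subcover
      (fun y : ↥F → T => (fun x => x - y) ⁻¹' O)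
      (fun y => hOopen.preimage (continuous_id.sub continuous_const)) hcover
    have hψ : ∀ j : ℕ, ∃ y : ↥t, col j - (y : ↥F → T) ∈ O := by
      intro j
      have hj := ht (Set.mem_univ (col j))
      simp only [Set.mem_iUnion] at hj
      obtain ⟨y, hyt, hy⟩ := hj
      exact ⟨⟨y, hyt⟩, hy⟩
    choose ψ hψ2 using hψ
    obtain ⟨y0, hy0⟩ := Finite.exists_infinite_fiber ψ
    have hJ0inf : (ψ ⁻¹' {y0}).Infinite := Set.infinite_coe_iff.1 hy0
    -- the key difference fact
    have hdiff : ∀ m n : ℕ, m ∈ ψ ⁻¹' {y0} → n ∈ ψ ⁻¹' {y0} →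
        ∀ p : ↥F, (p : G) m - (p : G) n ∈ V0 := by
      intro m n hm hn p
      have h1 : col m - ((y0 : ↥F → T)) ∈ O := by
        have := hψ2 m
        rwa [show ψ m = y0 from hm] at this
      have h2 : col n - ((y0 : ↥F → T)) ∈ O := by
        have := hψ2 n
        rwa [show ψ n = y0 from hn] at this
      have hmem : (col m - (y0 : ↥F → T), col n - (y0 : ↥F → T)) ∈ Wa ×ˢ Wb :=
        ⟨(hOsub h1).1, (hOsub h2).2⟩
      have hW'mem : col m - col n ∈ W' := by
        have := hprod hmem
        simpa [sub_sub_sub_cancel_right] using this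
      have := (Set.mem_pi.1 hW'mem) p (Set.mem_univ p)
      simpa using this
    have hJinf : ((ψ ⁻¹' {y0}) \ I).Infinite := hJ0inf.diff hIfin
    set J : Set ℕ := (ψ ⁻¹' {y0}) \ I with hJdef
    let e : ℕ ↪ ↥J := hJinf.natEmbedding
    let a : ℕ → ℕ := fun i => ((e (2 * i) : ↥J) : ℕ)
    let b : ℕ → ℕ := fun i => ((e (2 * i + 1) : ↥J) : ℕ)
    have hvalinj : ∀ m n : ℕ, ((e m : ↥J) : ℕ) = ((e n : ↥J) : ℕ) → m = n :=
      fun m n h => e.injective (Subtype.ext h)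
    have ha_inj : Function.Injective a := by
      intro m n h
      have := hvalinj _ _ h
      omega
    have hab : ∀ m n : ℕ, a m ≠ b n := by
      intro m n h
      have := hvalinj _ _ h
      omega
    have haJ : ∀ i, a i ∈ J := fun i => (e (2 * i)).2
    have hbJ : ∀ i, b i ∈ J := fun i => (e (2 * i + 1)).2
    have haI : ∀ i, a i ∉ I := fun i => (haJ i).2
    -- the lists
    set IL : List ℕ := hIfin.toFinset.toList with hILdef
    have hILnd : IL.Nodup := Finset.nodup_toList _
    have hILmem : ∀ i, i ∈ IL ↔ i ∈ I := by
      intro i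
      rw [hILdef, Finset.mem_toList, Set.Finite.mem_toFinset]
    set P : List (ℕ × ℕ) := IL.map fun i => (i, a i) with hPdef
    set S : List (ℕ × ℕ) := IL.map fun i => (a i, b i) with hSdef
    have hPfst : P.map Prod.fst = IL := by
      rw [hPdef, List.map_map]
      have hid : (Prod.fst ∘ fun i : ℕ => (i, a i)) = id := rfl
      rw [hid, List.map_id]
    have hPsnd : P.map Prod.snd = IL.map a := by
      rw [hPdef, List.map_map]; rfl
    have hSfst : S.map Prod.fst = IL.map a := by
      rw [hSdef, List.map_map]; rfl
    have hPnodup : ((P.map Prod.fst) ++ (P.map Prod.snd)).Nodup := by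
      rw [hPfst, hPsnd, List.nodup_append]
      refine ⟨hILnd, hILnd.map ha_inj, ?_⟩
      intro x hx y hx2 hxy
      obtain ⟨i, _, rfl⟩ := List.mem_map.1 hx2
      subst hxy
      exact haI i ((hILmem _).1 hx)
    have hinv : Function.Involutive (swapFn P) := swapFn_involutive hPnodup
    have hSfstnd : (S.map Prod.fst).Nodup := by
      rw [hSfst]; exact hILnd.map ha_inj
    -- evaluations
    have hswap_eval : ∀ i ∈ I, swapFn P i = a i := by
      intro i hi
      refine swapFn_of_lk (lk_eq_some ?_ ?_)
      · rw [hPdef]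
        exact List.mem_map.2 ⟨i, (hILmem i).2 hi, rfl⟩
      · rw [hPfst]; exact hILnd
    have hsan_eval : ∀ i ∈ I, san (lk S) (a i) = some (b i) := by
      intro i hi
      refine san_eq_some (lk_eq_some ?_ hSfstnd) (lk_eq_none ?_)
      · rw [hSdef]
        exact List.mem_map.2 ⟨i, (hILmem i).2 hi, rfl⟩
      · rw [hSfst]
        intro hmem
        obtain ⟨i', _, heq⟩ := List.mem_map.1 hmem
        exact hab i' i heq
    -- the automorphism
    refine ⟨-(Phi (P, S)), ⟨(P, S), rfl⟩, ?_⟩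
    intro p hp
    refine ⟨Phi (P, S) p, ?_, ?_⟩
    · -- Phi (P,S) p ∈ U
      refine hVU ?_
      rw [Set.mem_pi]
      intro i hi
      have hcalc : Phi (P, S) p i = p (a i) - p (b i) := by
        have h1 : Phi (P, S) p = swapAut (swapFn P) (shearAut (lk S) p) :=
          AddAut.mul_apply _ _ _ _
        rw [h1, swapAut_apply hinv, hswap_eval i hi, shearAut_apply, hsan_eval i hi]
        rfl
      rw [hcalc]
      have := hdiff (a i) (b i) (haJ i).1 (hbJ i).1 ⟨p, hp⟩
      exact Set.biInter_subset_of_mem hi this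
    · rw [AddAut.inv_def]
      exact AddEquiv.symm_apply_apply _ _
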